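/- Let E be a real normed vector space, let z_0, ε ∈ E, ω ∈ ℝ, and let α_t, σ_t, α_s, σ_s > 0 and s' ∈ ℝ with α_{s'}, σ_{s'} > 0 be noise-schedule values such that I_t := σ_t/α_t − σ_s/α_s ≠ 0; set I_{s'} := σ_{s'}/α_{s'} − σ_s/α_s. Let ε_c, ε_u : E × ℝ → E be arbitrary functions, and define G_c(z, u) = (α_s/α_u)·z − α_s·I_u·ε_c(z, u) and G_u(z, u) = (α_s/α_u)·z − α_s·I_u·ε_u(z, u) for u ∈ {t, s'}. Set z_t = α_t·z_0 + σ_t·ε, z_s = α_s·z_0 + σ_s·ε, and let ẑ ∈ E be arbitrary. Then ε_c(z_t, t) − ε + ω·(ε_c(z_t, t) − ε_u(z_t, t)) = (1/(α_s·I_t))·( G_u(ẑ, s') − G_u(z_t, t) + (ω+1)·(G_u(z_t, t) − G_c(z_t, t)) + z_s − G_u(ẑ, s') ). -/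

import Mathlib

/-- Equation (9) of the paper: computationally efficient equivalent transformation of the
SDS-as-SCTD identity, in which the condition appears only in the cross-consistency term. -/
theorem sds_as_sctd_efficient
    {E : Type*} [NormedAddCommGroup E] [NormedSpace ℝ E]
    (z0 ε : E) (ω : ℝ) (t s' : ℝ)
    (αt σt αs σs αs' σs' : ℝ)
    (hαt : 0 < αt) (hσt : 0 < σt) (hαs : 0 < αs) (hσs : 0 < σs)
    (hαs' : 0 < αs') (hσs' : 0 < σs')
    (It Is' : ℝ) (hIt : It = σt / αt - σs / αs) (hIt0 : It ≠ 0)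
    (hIs' : Is' = σs' / αs' - σs / αs)
    (εc εu : E × ℝ → E)
    (Gc Gu : E → ℝ → E)
    (hGct : ∀ z : E, Gc z t = (αs / αt) • z - (αs * It) • εc (z, t))
    (hGcs' : ∀ z : E, Gc z s' = (αs / αs') • z - (αs * Is') • εc (z, s'))
    (hGut : ∀ z : E, Gu z t = (αs / αt) • z - (αs * It) • εu (z, t))
    (hGus' : ∀ z : E, Gu z s' = (αs / αs') • z - (αs * Is') • εu (z, s'))
    (zt zs : E) (hzt : zt = αt • z0 + σt • ε) (hzs : zs = αs • z0 + σs • ε)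
    (zhat : E) :
    εc (zt, t) - ε + ω • (εc (zt, t) - εu (zt, t)) =
      (1 / (αs * It)) •
        (Gu zhat s' - Gu zt t + (ω + 1) • (Gu zt t - Gc zt t) + zs - Gu zhat s') := by
  subst hIt hzt hzs
  have h2 : σt * αs - αt * σs ≠ 0 := by
    intro h
    apply hIt0
    field_simp
    linarith
  simp only [hGut, hGct, hGus']
  have h3 : αs * σt - αt * σs ≠ 0 := by rw [mul_comm αs σt]; exact h2
  match_scalars <;> field_simp <;> ring
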